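/- Assume p(x,·) is Ψ-convex on Y for all x ∈ X. Then zero duality gap, i.e. inf_x sup_{ψ∈Ψ} L(x,ψ) = sup_{ψ∈Ψ} inf_x L(x,ψ), holds if and only if V(y₀) = V**(y₀), where V(y) = inf_x p(x,y) is the optimal value function. -/

import Mathlib

private lemma ereal_neg_iInf {ι : Sort*} (f : ι → EReal) :
    -(⨅ i, f i) = ⨆ i, -f i := by
  apply le_antisymm
  · rw [EReal.neg_le]
    refine le_iInf fun i => ?_
    rw [← EReal.neg_le]
    exact le_iSup (fun i => -f i) i
  · exact iSup_le fun i => EReal.neg_le_neg_iff.2 (iInf_le f i)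

private lemma ereal_neg_iSup {ι : Sort*} (f : ι → EReal) :
    -(⨆ i, f i) = ⨅ i, -f i := by
  rw [← neg_neg (⨅ i, -f i), ereal_neg_iInf]
  simp only [neg_neg]

private lemma ereal_coe_add_iSup {ι : Sort*} (c : ℝ) (f : ι → EReal) :
    (⨆ i, ((c : EReal) + f i)) = (c : EReal) + ⨆ i, f i := by
  apply le_antisymm
  · exact iSup_le fun i => add_le_add le_rfl (le_iSup f i)
  · refine EReal.add_le_of_forall_lt fun a' ha' b' hb' => ?_
    obtain ⟨i, hi⟩ := lt_iSup_iff.1 hb'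
    exact le_trans (add_le_add ha'.le hi.le) (le_iSup (fun i => (c : EReal) + f i) i)

private lemma ereal_coe_sub_iInf {ι : Sort*} (c : ℝ) (f : ι → EReal) :
    (⨆ i, ((c : EReal) - f i)) = (c : EReal) - ⨅ i, f i := by
  simp only [sub_eq_add_neg, ereal_neg_iInf]
  exact ereal_coe_add_iSup c fun i => -f i

private lemma ereal_coe_sub_iSup {ι : Sort*} (c : ℝ) (f : ι → EReal) :
    (⨅ i, ((c : EReal) - f i)) = (c : EReal) - ⨆ i, f i := by
  rw [← neg_neg (⨅ i, ((c : EReal) - f i)), ereal_neg_iInf]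
  have : ∀ i, -((c : EReal) - f i) = ((-c : ℝ) : EReal) - (-f i) := by
    intro i
    rw [EReal.neg_sub (Or.inl (EReal.coe_ne_bot c)) (Or.inl (EReal.coe_ne_top c))]
    simp [sub_eq_add_neg]
  simp only [this]
  rw [ereal_coe_sub_iInf]
  rw [← ereal_neg_iSup]
  rw [EReal.neg_sub (Or.inl (EReal.coe_ne_bot (-c))) (Or.inl (EReal.coe_ne_top (-c)))]
  simp [sub_eq_add_neg]

/-- If p(x,·) is Ψ-convex on Y for all x, then zero duality gap
inf sup L = sup inf L holds iff V(y₀) = V**(y₀). -/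
theorem stmt_10 {X Y : Type*} (Ψ : Set (Y → ℝ)) (y₀ : Y)
    (p : X → Y → EReal)
    (hp : ∀ x y, p x y =
      ⨆ ψ ∈ Ψ, ((ψ y : EReal) - ⨆ z, ((ψ z : EReal) - p x z)))
    (V : Y → EReal) (hV : ∀ y, V y = ⨅ x, p x y)
    (L : X → (Y → ℝ) → EReal)
    (hL : ∀ x ψ, L x ψ = (ψ y₀ : EReal) - ⨆ y, ((ψ y : EReal) - p x y)) :
    ((⨅ x, ⨆ ψ ∈ Ψ, L x ψ) = ⨆ ψ ∈ Ψ, ⨅ x, L x ψ) ↔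
      V y₀ = ⨆ ψ ∈ Ψ, ((ψ y₀ : EReal) - ⨆ y, ((ψ y : EReal) - V y)) := by
  have hA : (⨅ x, ⨆ ψ ∈ Ψ, L x ψ) = V y₀ := by
    rw [hV]
    refine iInf_congr fun x => ?_
    simp only [hL]
    exact (hp x y₀).symm
  have hB : (⨆ ψ ∈ Ψ, ⨅ x, L x ψ) =
      ⨆ ψ ∈ Ψ, ((ψ y₀ : EReal) - ⨆ y, ((ψ y : EReal) - V y)) := by
    refine iSup_congr fun ψ => iSup_congr fun _ => ?_
    simp only [hL]
    rw [ereal_coe_sub_iSup (ψ y₀) fun x => ⨆ y, ((ψ y : EReal) - p x y)]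
    congr 1
    rw [iSup_comm]
    refine iSup_congr fun y => ?_
    rw [ereal_coe_sub_iInf (ψ y) fun x => p x y, ← hV y]
  rw [hA, hB]
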